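/- Let n ≥ 2 and let i, k be coprime integers with 1 ≤ i < k ≤ n/2. In the regular bipartite drawing of K_{n,n} with width 1 and unit steps (p_i = (0, i−1), q_j = (1, j−1)), every uniform (i,k)-crossing lies on the vertical line x = i/k and has y-coordinate of the form j/k for some integer j with 0 ≤ j ≤ kn − k; consequently the number of uniform (i,k)-crossings is at most kn. -/

import Mathlib

/-- `r` is a uniform `(i,k)`-crossing in the regular bipartite drawing of `K_{n,n}` with unit
width and unit steps (`p a = (0, a-1)`, `q b = (1, b-1)`): `r` is an intersection point of two
segments `p a q b` and `p (a+i) q (b+i-k)` with all indices in `{1,…,n}`. -/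
def UnifCross (n i k : ℕ) (r : ℝ × ℝ) : Prop :=
  ∃ a b : ℤ, 1 ≤ a ∧ a + (i : ℤ) ≤ n ∧ (k : ℤ) - i + 1 ≤ b ∧ b ≤ n ∧
    r ∈ segment ℝ ((0 : ℝ), (a : ℝ) - 1) ((1 : ℝ), (b : ℝ) - 1) ∩
      segment ℝ ((0 : ℝ), (a : ℝ) + i - 1) ((1 : ℝ), (b : ℝ) + i - k - 1)

/-- For coprime `1 ≤ i < k ≤ n/2`, every uniform `(i,k)`-crossing in the regular drawing of
`K_{n,n}` lies on the vertical line `x = i/k` and has y-coordinate `j/k` for some integer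
`0 ≤ j ≤ kn - k`; consequently there are at most `kn` uniform `(i,k)`-crossings. -/
theorem stmt11 (n i k : ℕ) (hn : 2 ≤ n) (hco : Nat.Coprime i k)
    (h1 : 1 ≤ i) (h2 : i < k) (h3 : 2 * k ≤ n) :
    (∀ r : ℝ × ℝ, UnifCross n i k r →
      r.1 = (i : ℝ) / k ∧
        ∃ j : ℤ, 0 ≤ j ∧ j ≤ (k : ℤ) * n - k ∧ r.2 = (j : ℝ) / k) ∧
    {r : ℝ × ℝ | UnifCross n i k r}.ncard ≤ k * n := by
  have hkpos : 0 < k := lt_of_le_of_lt (Nat.zero_le i) h2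
  have hk0 : (0:ℝ) < (k:ℝ) := by exact_mod_cast hkpos
  have key : ∀ r : ℝ × ℝ, UnifCross n i k r →
      r.1 = (i : ℝ) / k ∧
        ∃ j : ℤ, 0 ≤ j ∧ j ≤ (k : ℤ) * n - k ∧ r.2 = (j : ℝ) / k := by
    rintro r ⟨a, b, ha1, ha2, hb1, hb2, hr1, hr2⟩
    rw [segment_eq_image] at hr1 hr2
    obtain ⟨t, ht, rfl⟩ := hr1
    obtain ⟨s, hs, heq⟩ := hr2
    simp only [Prod.ext_iff, Prod.smul_mk, Prod.mk_add_mk, smul_eq_mul] at heq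
    obtain ⟨heq1, heq2⟩ := heq
    have hst : s = t := by linarith [heq1]
    subst hst
    have htk : s = (i:ℝ) / k := by
      have : (i:ℝ) = s * k := by nlinarith [heq2]
      field_simp [this]
      linarith
    constructor
    · simpa using htk
    · refine ⟨(k:ℤ) * (a - 1) + i * (b - a), ?_, ?_, ?_⟩
      · nlinarith [mul_nonneg (sub_nonneg.2 (le_of_lt (by exact_mod_cast h2 : (i:ℤ) < k)))
          (sub_nonneg.2 ha1)]
      · nlinarith [mul_nonneg (sub_nonneg.2 (le_of_lt (by exact_mod_cast h2 : (i:ℤ) < k)))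
          (by linarith : (0:ℤ) ≤ (n:ℤ) - i - a), (by exact_mod_cast h1 : (1:ℤ) ≤ i)]
      · simp only [htk]
        simp only [Prod.snd_add, Prod.smul_snd, smul_eq_mul]
        push_cast
        field_simp
        ring
  refine ⟨key, ?_⟩
  have hsub : {r : ℝ × ℝ | UnifCross n i k r} ⊆
      (fun j : ℤ => ((i : ℝ) / k, (j : ℝ) / k)) '' (Set.Icc 0 ((k:ℤ) * n - k)) := by
    rintro r hr
    obtain ⟨hx, j, hj0, hj1, hy⟩ := key r hr
    exact ⟨j, ⟨hj0, hj1⟩, by rw [Prod.ext_iff]; exact ⟨hx.symm, hy.symm⟩⟩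
  have hfin : ((fun j : ℤ => ((i : ℝ) / k, (j : ℝ) / k)) '' (Set.Icc 0 ((k:ℤ) * n - k))).Finite :=
    (Set.finite_Icc _ _).image _
  calc {r : ℝ × ℝ | UnifCross n i k r}.ncard
      ≤ ((fun j : ℤ => ((i : ℝ) / k, (j : ℝ) / k)) '' (Set.Icc 0 ((k:ℤ) * n - k))).ncard :=
        Set.ncard_le_ncard hsub hfin
    _ ≤ (Set.Icc (0:ℤ) ((k:ℤ) * n - k)).ncard := Set.ncard_image_le (Set.finite_Icc _ _)
    _ ≤ k * n := by
        rw [← Finset.coe_Icc, Set.ncard_coe_finset, Int.card_Icc]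
        have hkn : k ≤ k * n := Nat.le_mul_of_pos_right k (by omega)
        have : ((k:ℤ) * n) = ((k * n : ℕ) : ℤ) := by push_cast; ring
        rw [this]
        omega
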